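/- Let t > 0, g > 0, let f : [0, t] → ℝ be continuous, and let ρ ∈ ℝ. Define u* : [0, t] → ℝ by u*(s) = −ρ f(t − s) / √(1 + ρ² f(t − s)²). Then for every measurable function u : [0, t] → ℝ with |u(s)| ≤ 1 for almost every s ∈ [0, t] and ∫₀ᵗ f(t − s) u(s) ds = ∫₀ᵗ f(t − s) u*(s) ds, one has ∫₀ᵗ (g/2) ( 1 − √(1 − u*(s)²) ) ds ≤ ∫₀ᵗ (g/2) ( 1 − √(1 − u(s)²) ) ds. -/

import Mathlib

open MeasureTheory Set intervalIntegral

private lemma key_calc (c : ℝ) :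
    1 - Real.sqrt (1 - (-c / Real.sqrt (1 + c^2))^2) + c * (-c / Real.sqrt (1 + c^2))
      = 1 - Real.sqrt (1 + c^2) := by
  have h1 : (0:ℝ) < 1 + c^2 := by positivity
  have hD0 : 0 < Real.sqrt (1 + c^2) := Real.sqrt_pos.2 h1
  set D := Real.sqrt (1 + c^2) with hD
  have hD2 : D^2 = 1 + c^2 := Real.sq_sqrt h1.le
  have h2 : 1 - (-c / D)^2 = (1/D)^2 := by
    field_simp
    nlinarith [hD2]
  rw [h2, Real.sqrt_sq (by positivity)]
  field_simp
  nlinarith [hD2]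

private lemma key_ineq (c v : ℝ) (hv : |v| ≤ 1) :
    1 - Real.sqrt (1 + c^2) ≤ 1 - Real.sqrt (1 - v^2) + c * v := by
  have hv2 : v^2 ≤ 1 := by
    have := abs_le.1 hv
    nlinarith [this.1, this.2]
  have hA : Real.sqrt (1 - v^2) ^ 2 = 1 - v^2 := Real.sq_sqrt (by linarith)
  have hA0 : 0 ≤ Real.sqrt (1 - v^2) := Real.sqrt_nonneg _
  have hB : Real.sqrt (1 + c^2) ^ 2 = 1 + c^2 := Real.sq_sqrt (by positivity)
  have hB0 : 0 ≤ Real.sqrt (1 + c^2) := Real.sqrt_nonneg _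
  nlinarith [sq_nonneg (c * Real.sqrt (1 - v^2) + v), hB0, hA0, hA, hB,
    mul_nonneg hA0 hB0]

private lemma key_ineq' (c v : ℝ) (hv : |v| ≤ 1) :
    1 - Real.sqrt (1 - (-c / Real.sqrt (1 + c^2))^2) + c * (-c / Real.sqrt (1 + c^2))
      ≤ 1 - Real.sqrt (1 - v^2) + c * v := by
  rw [key_calc]; exact key_ineq c v hv

/-- calculus-of-variations optimality (Section 5 of the paper): among all
controls `u` with `|u| ≤ 1` a.e. achieving the same value of the linear constraint
`∫₀ᵗ f(t−s) u(s) ds`, the cost `∫₀ᵗ (g/2)(1 − √(1 − u(s)²)) ds` is minimized by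
`u*(s) = −ρ f(t−s)/√(1 + ρ² f(t−s)²)`. -/
theorem stmt_9 (t g ρ : ℝ) (ht : 0 < t) (hg : 0 < g) (f : ℝ → ℝ)
    (hf : ContinuousOn f (Set.Icc 0 t)) :
    ∀ u : ℝ → ℝ, Measurable u →
      (∀ᵐ s ∂(MeasureTheory.volume.restrict (Set.Icc (0 : ℝ) t)), |u s| ≤ 1) →
      (∫ s in (0 : ℝ)..t, f (t - s) * u s) =
        (∫ s in (0 : ℝ)..t,
          f (t - s) * (-ρ * f (t - s) / Real.sqrt (1 + ρ ^ 2 * f (t - s) ^ 2))) →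
      (∫ s in (0 : ℝ)..t,
          g / 2 * (1 - Real.sqrt (1 -
            (-ρ * f (t - s) / Real.sqrt (1 + ρ ^ 2 * f (t - s) ^ 2)) ^ 2)))
        ≤ ∫ s in (0 : ℝ)..t, g / 2 * (1 - Real.sqrt (1 - u s ^ 2)) := by
  intro u hu hub hcon
  set F : ℝ → ℝ := fun s => f (t - s) with hFdef
  have hFc : ContinuousOn F (Set.Icc 0 t) := by
    apply hf.comp (continuousOn_const.sub continuousOn_id)
    intro s hs
    simp only [id_eq, Set.mem_Icc, Pi.sub_apply] at hs ⊢
    constructor <;> linarith [hs.1, hs.2]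
  -- the optimal control
  set ustar : ℝ → ℝ := fun s => -ρ * F s / Real.sqrt (1 + ρ ^ 2 * F s ^ 2) with hustar
  have hsq : ∀ s, 1 + ρ ^ 2 * F s ^ 2 = 1 + (ρ * F s) ^ 2 := by intro s; ring
  have hust_eq : ∀ s, ustar s = -(ρ * F s) / Real.sqrt (1 + (ρ * F s) ^ 2) := by
    intro s; simp only [hustar, hsq s]; ring_nf
  -- continuity of ustar on Icc
  have hustc : ContinuousOn ustar (Set.Icc 0 t) := by
    apply ContinuousOn.div
    · exact (continuousOn_const.mul hFc)
    · exact (continuousOn_const.add (continuousOn_const.mul (hFc.pow 2))).sqrt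
    · intro s hs
      have : (0:ℝ) < 1 + ρ ^ 2 * F s ^ 2 := by positivity
      exact ne_of_gt (Real.sqrt_pos.2 this)
  -- bound on F
  obtain ⟨M, hM⟩ := isCompact_Icc.exists_bound_of_continuousOn hFc
  have hM0 : 0 ≤ M := le_trans (norm_nonneg _) (hM 0 (Set.mem_Icc.2 ⟨le_refl 0, ht.le⟩))
  -- integrand abbreviations
  set P : ℝ → ℝ := fun s => 1 - Real.sqrt (1 - ustar s ^ 2) with hP
  set Q : ℝ → ℝ := fun s => 1 - Real.sqrt (1 - u s ^ 2) with hQ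
  -- integrability facts
  have hPint : IntervalIntegrable P volume 0 t := by
    apply ContinuousOn.intervalIntegrable
    rw [Set.uIcc_of_le ht.le]
    exact continuousOn_const.sub (continuousOn_const.sub (hustc.pow 2)).sqrt
  have hFustint : IntervalIntegrable (fun s => F s * ustar s) volume 0 t := by
    apply ContinuousOn.intervalIntegrable
    rw [Set.uIcc_of_le ht.le]
    exact hFc.mul hustc
  have hQmeas : Measurable Q := by
    apply Measurable.sub measurable_const
    exact Real.continuous_sqrt.measurable.comp (measurable_const.sub ((hu.pow_const 2)))
  have hQint : IntervalIntegrable Q volume 0 t := by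
    rw [intervalIntegrable_iff_integrableOn_Ioc_of_le ht.le]
    apply Integrable.mono' (g := fun _ => (1:ℝ))
    · exact integrableOn_const measure_Ioc_lt_top.ne
    · exact hQmeas.aestronglyMeasurable
    · apply ae_of_all
      intro s
      have h1 : Real.sqrt (1 - u s ^ 2) ≤ 1 := by
        calc Real.sqrt (1 - u s ^ 2) ≤ Real.sqrt 1 :=
              Real.sqrt_le_sqrt (by nlinarith [sq_nonneg (u s)])
          _ = 1 := Real.sqrt_one
      have h0 : 0 ≤ Real.sqrt (1 - u s ^ 2) := Real.sqrt_nonneg _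
      rw [Real.norm_eq_abs, abs_le]
      constructor <;> simp only [hQ] <;> linarith
  have hub' : ∀ᵐ s ∂(volume.restrict (Set.Ioc (0:ℝ) t)), |u s| ≤ 1 :=
    ae_restrict_of_ae_restrict_of_subset Set.Ioc_subset_Icc_self hub
  have hFuint : IntervalIntegrable (fun s => F s * u s) volume 0 t := by
    rw [intervalIntegrable_iff_integrableOn_Ioc_of_le ht.le]
    apply Integrable.mono' (g := fun _ => M)
    · exact integrableOn_const measure_Ioc_lt_top.ne
    · exact (((hFc.mono Set.Ioc_subset_Icc_self).aemeasurable
        measurableSet_Ioc).mul hu.aemeasurable).aestronglyMeasurable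
    · filter_upwards [hub', ae_restrict_mem measurableSet_Ioc] with s hs hmem
      rw [Real.norm_eq_abs, abs_mul]
      calc |F s| * |u s| ≤ M * 1 := by
            apply mul_le_mul _ hs (abs_nonneg _) hM0
            simpa [Real.norm_eq_abs] using hM s (Set.Ioc_subset_Icc_self hmem)
        _ = M := mul_one M
  -- the key monotonicity step
  have hmono : (∫ s in (0:ℝ)..t, (P s + ρ * (F s * ustar s)))
      ≤ ∫ s in (0:ℝ)..t, (Q s + ρ * (F s * u s)) := by
    apply integral_mono_ae_restrict ht.le
      (hPint.add (hFustint.const_mul ρ)) (hQint.add (hFuint.const_mul ρ))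
    filter_upwards [hub] with s hs
    have h := key_ineq' (ρ * F s) (u s) hs
    rw [← hust_eq s] at h
    simp only [hP, hQ]
    have heq : ρ * F s * ustar s = ρ * (F s * ustar s) := by ring
    have heq2 : ρ * F s * u s = ρ * (F s * u s) := by ring
    linarith [h, heq ▸ h]
  rw [integral_add hPint (hFustint.const_mul ρ),
      integral_add hQint (hFuint.const_mul ρ),
      intervalIntegral.integral_const_mul, intervalIntegral.integral_const_mul] at hmono
  have hcon' : (∫ s in (0:ℝ)..t, F s * u s) = ∫ s in (0:ℝ)..t, F s * ustar s := hcon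
  rw [hcon'] at hmono
  have hPQ : (∫ s in (0:ℝ)..t, P s) ≤ ∫ s in (0:ℝ)..t, Q s := by linarith
  calc (∫ s in (0:ℝ)..t, g / 2 * P s) = g / 2 * ∫ s in (0:ℝ)..t, P s :=
        intervalIntegral.integral_const_mul _ _
    _ ≤ g / 2 * ∫ s in (0:ℝ)..t, Q s := by
        apply mul_le_mul_of_nonneg_left hPQ (by positivity)
    _ = ∫ s in (0:ℝ)..t, g / 2 * Q s := (intervalIntegral.integral_const_mul _ _).symm
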